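/- arXiv:1304.1255 — 3 statements merged into one kernel-verified Lean document; each statement's English description precedes it below -/
import Mathlib

section
/- Let X be an integrable real random variable and Y an R^d-valued random vector with absolutely continuous distribution. Then E|E[X|Y]| equals the supremum of E[X g(Y)] over all continuously differentiable compactly supported functions g : R^d → R with sup norm at most 1. -/
open MeasureTheory ProbabilityTheory Set Metric Manifold
open scoped ENNReal NNReal

lemma smooth_pm_one {E : Type*} [NormedAddCommGroup E] [InnerProductSpace ℝ E]
    [FiniteDimensional ℝ E] {K₁ K₂ : Set E} (h₁ : IsCompact K₁) (h₂ : IsCompact K₂)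
    (hd : Disjoint K₁ K₂) :
    ∃ g : E → ℝ, ContDiff ℝ 1 g ∧ HasCompactSupport g ∧ (∀ x, |g x| ≤ 1) ∧
      EqOn g 1 K₁ ∧ EqOn g (-1) K₂ := by
  obtain ⟨f, hf0, hf1, hf01⟩ := exists_contMDiffMap_zero_one_of_isClosed (𝓘(ℝ, E)) (n := (⊤ : ℕ∞)) h₂.isClosed
    h₁.isClosed hd.symm
  have hfC : ContDiff ℝ ((⊤ : ℕ∞) : WithTop ℕ∞) (f : E → ℝ) := contMDiff_iff_contDiff.mp f.contMDiff
  obtain ⟨R, hR⟩ : ∃ R, K₁ ∪ K₂ ⊆ ball (0:E) R := (h₁.union h₂).isBounded.subset_ball 0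
  have hRpos : 0 < max R 1 := lt_max_of_lt_right one_pos
  set χ : ContDiffBump (0:E) := ⟨max R 1, 2 * max R 1, hRpos, by linarith⟩ with hχ
  refine ⟨fun x => χ x * (2 * f x - 1), ?_, ?_, ?_, ?_, ?_⟩
  · exact ((χ.contDiff (n := (⊤:ℕ∞))).of_le (by exact_mod_cast (le_top : (1:ℕ∞) ≤ ⊤))).mul (((contDiff_const.mul (hfC.of_le (by exact_mod_cast (le_top : (1:ℕ∞) ≤ ⊤)))).sub contDiff_const))
  · exact χ.hasCompactSupport.mul_right
  · intro x
    rw [abs_mul]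
    have h1 : |χ x| ≤ 1 := by rw [abs_of_nonneg χ.nonneg]; exact χ.le_one
    have h2 : |2 * f x - 1| ≤ 1 := by
      have := hf01 x
      rw [abs_le]; constructor <;> [linarith [this.1]; linarith [this.2]]
    calc |χ x| * |2 * f x - 1| ≤ 1 * 1 := mul_le_mul h1 h2 (abs_nonneg _) zero_le_one
    _ = 1 := one_mul 1
  · intro x hx
    have hb : χ x = 1 := χ.one_of_mem_closedBall (ball_subset_closedBall
      ((ball_subset_ball (le_max_left R 1)) (hR (Or.inl hx))))
    have : f x = 1 := hf1 hx
    simp only [Pi.one_apply]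
    rw [hb, this]; norm_num
  · intro x hx
    have hb : χ x = 1 := χ.one_of_mem_closedBall (ball_subset_closedBall
      ((ball_subset_ball (le_max_left R 1)) (hR (Or.inr hx))))
    have : f x = 0 := hf0 hx
    simp only [Pi.neg_apply, Pi.one_apply]
    rw [hb, this]; norm_num

lemma key_eq {Ω : Type*} {m m0 : MeasurableSpace Ω} (μ : Measure Ω) [IsFiniteMeasure μ]
    (hm : m ≤ m0) {X : Ω → ℝ} (hX : Integrable X μ) {f : Ω → ℝ}
    (hfm : StronglyMeasurable[m] f) (hfb : ∀ ω, ‖f ω‖ ≤ 1) :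
    ∫ ω, X ω * f ω ∂μ = ∫ ω, (μ[X|m]) ω * f ω ∂μ := by
  haveI : SigmaFinite (μ.trim hm) := by
    have : IsFiniteMeasure (μ.trim hm) := isFiniteMeasure_trim hm
    infer_instance
  have hint : Integrable (f * X) μ :=
    Integrable.bdd_mul hX (hfm.mono hm).aestronglyMeasurable (ae_of_all _ hfb)
  have hpull : μ[f * X | m] =ᵐ[μ] f * μ[X | m] :=
    condExp_mul_of_stronglyMeasurable_left hfm hint hX
  calc ∫ ω, X ω * f ω ∂μ = ∫ ω, (f * X) ω ∂μ := by
        congr 1; ext ω; simp [mul_comm]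
  _ = ∫ ω, (μ[f * X | m]) ω ∂μ := (integral_condExp hm).symm
  _ = ∫ ω, (f * μ[X | m]) ω ∂μ := integral_congr_ae hpull
  _ = ∫ ω, (μ[X|m]) ω * f ω ∂μ := by congr 1; ext ω; simp [mul_comm]

lemma approx_lem {Ω : Type*} [MeasureSpace Ω] [IsProbabilityMeasure (ℙ : Measure Ω)]
    {d : ℕ} (Y : Ω → EuclideanSpace ℝ (Fin d)) (hY : Measurable Y)
    (Z : Ω → ℝ) (hZint : Integrable Z ℙ)
    (hZm : StronglyMeasurable[MeasurableSpace.comap Y inferInstance] Z)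
    {ε : ℝ} (hε : 0 < ε) :
    ∃ g : EuclideanSpace ℝ (Fin d) → ℝ, ContDiff ℝ 1 g ∧ HasCompactSupport g ∧
      (∀ x, |g x| ≤ 1) ∧ ∫ ω, |Z ω| ∂ℙ - ε ≤ ∫ ω, Z ω * g (Y ω) ∂ℙ := by
  classical
  -- the weighted pushforward measure
  set ν : Measure (EuclideanSpace ℝ (Fin d)) := ((ℙ : Measure Ω).withDensity (fun ω => (‖Z ω‖₊ : ℝ≥0∞))).map Y with hν
  have hwd_fin : IsFiniteMeasure ((ℙ : Measure Ω).withDensity (fun ω => (‖Z ω‖₊ : ℝ≥0∞))) := by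
    apply isFiniteMeasure_withDensity
    exact hZint.2.ne
  haveI : IsFiniteMeasure ν := by
    constructor
    rw [hν, Measure.map_apply hY MeasurableSet.univ]
    simp only [Set.preimage_univ]
    exact measure_lt_top _ _
  -- value of ν on measurable sets
  have hνval : ∀ s : Set (EuclideanSpace ℝ (Fin d)), MeasurableSet s → ν s = ∫⁻ ω in Y ⁻¹' s, ‖Z ω‖₊ ∂ℙ := by
    intro s hs
    rw [hν, Measure.map_apply hY hs, withDensity_apply _ (hY hs)]
  -- real bridge
  have hbridge : ∀ s : Set (EuclideanSpace ℝ (Fin d)), MeasurableSet s →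
      ∫ ω in Y ⁻¹' s, |Z ω| ∂ℙ = (ν s).toReal := by
    intro s hs
    rw [hνval s hs]
    have : ∀ ω, |Z ω| = ‖Z ω‖ := fun ω => rfl
    simp_rw [this]
    rw [integral_norm_eq_lintegral_enorm (hZint.1.restrict)]
    rfl
  -- the positivity set
  have hA : MeasurableSet[MeasurableSpace.comap Y inferInstance] (Z ⁻¹' Ici 0) :=
    hZm.measurable measurableSet_Ici
  obtain ⟨B, hBmeas, hBpre⟩ := hA
  set ε' : ℝ≥0∞ := ENNReal.ofReal (ε/4) with hε'def
  have hε' : ε' ≠ 0 := by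
    simp only [hε'def, ne_eq, ENNReal.ofReal_eq_zero, not_le]
    linarith
  obtain ⟨K₁, hK₁B, hK₁c, hK₁⟩ := hBmeas.exists_isCompact_diff_lt (measure_ne_top ν B) hε'
  obtain ⟨K₂, hK₂B, hK₂c, hK₂⟩ :=
    hBmeas.compl.exists_isCompact_diff_lt (measure_ne_top ν Bᶜ) hε'
  have hdisj : Disjoint K₁ K₂ := disjoint_compl_right.mono hK₁B hK₂B
  obtain ⟨g, hg1, hg2, hg3, hgK₁, hgK₂⟩ := smooth_pm_one hK₁c hK₂c hdisj
  refine ⟨g, hg1, hg2, hg3, ?_⟩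
  have hZg : Integrable (fun ω => Z ω * g (Y ω)) ℙ := by
    have := Integrable.bdd_mul hZint
      ((hg1.continuous.measurable.comp hY)).aestronglyMeasurable
      (ae_of_all _ fun ω => by rw [Real.norm_eq_abs]; exact hg3 _)
    simpa [mul_comm] using this
  set F : Ω → ℝ := fun ω => |Z ω| - Z ω * g (Y ω) with hF
  have hFint : Integrable F ℙ := hZint.abs.sub hZg
  have habs : ∀ ω, |Z ω * g (Y ω)| ≤ |Z ω| := by
    intro ω
    rw [abs_mul]
    calc |Z ω| * |g (Y ω)| ≤ |Z ω| * 1 :=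
          mul_le_mul_of_nonneg_left (hg3 _) (abs_nonneg _)
    _ = |Z ω| := mul_one _
  set W : Set Ω := Y ⁻¹' (K₁ ∪ K₂) with hW
  have hWmeas : MeasurableSet W := hY (hK₁c.union hK₂c).measurableSet
  have hFW : ∀ ω ∈ W, F ω = 0 := by
    intro ω hω
    rcases hω with h1 | h2
    · have hg : g (Y ω) = 1 := hgK₁ h1
      have hzpos : ω ∈ Z ⁻¹' Ici 0 := hBpre ▸ (hK₁B h1 : Y ω ∈ B)
      simp only [hF, hg, mul_one]
      rw [abs_of_nonneg (hzpos : (0:ℝ) ≤ Z ω)]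
      ring
    · have hg : g (Y ω) = -1 := hgK₂ h2
      have hzneg : ω ∉ Z ⁻¹' Ici 0 := by
        rw [← hBpre]
        exact fun hmem => hK₂B h2 hmem
      have hzneg' : Z ω < 0 := by
        simp only [mem_preimage, mem_Ici, not_le] at hzneg
        exact hzneg
      simp only [hF, hg, mul_neg, mul_one]
      rw [abs_of_neg hzneg']
      ring
  have hFrestrict : ∫ ω, F ω ∂ℙ = ∫ ω in Wᶜ, F ω ∂ℙ := by
    rw [← integral_indicator hWmeas.compl]
    apply integral_congr_ae
    apply ae_of_all
    intro ω
    by_cases h : ω ∈ Wᶜ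
    · rw [Set.indicator_of_mem h]
    · rw [Set.indicator_of_notMem h]
      exact hFW ω (not_not.mp h)
  have hFle : ∫ ω in Wᶜ, F ω ∂ℙ ≤ ∫ ω in Wᶜ, 2 * |Z ω| ∂ℙ := by
    apply setIntegral_mono_on hFint.integrableOn
      ((hZint.abs.const_mul 2).integrableOn) hWmeas.compl
    intro ω _
    simp only [hF]
    linarith [neg_abs_le (Z ω * g (Y ω)), habs ω]
  have hWc : Wᶜ = Y ⁻¹' (K₁ ∪ K₂)ᶜ := by rw [hW, ← Set.preimage_compl]
  have h2 : ∫ ω in Wᶜ, 2 * |Z ω| ∂ℙ = 2 * (ν ((K₁ ∪ K₂)ᶜ)).toReal := by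
    rw [MeasureTheory.integral_const_mul, hWc, hbridge _ (hK₁c.union hK₂c).measurableSet.compl]
  have hsub : (K₁ ∪ K₂)ᶜ ⊆ (B \ K₁) ∪ (Bᶜ \ K₂) := by
    intro x hx
    simp only [Set.mem_compl_iff, Set.mem_union, not_or] at hx
    by_cases hB : x ∈ B
    · exact Or.inl ⟨hB, hx.1⟩
    · exact Or.inr ⟨hB, hx.2⟩
  have hνtot : ν ((K₁ ∪ K₂)ᶜ) ≤ ε' + ε' :=
    (measure_mono hsub).trans ((measure_union_le _ _).trans (add_le_add hK₁.le hK₂.le))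
  have htoReal : (ν ((K₁ ∪ K₂)ᶜ)).toReal ≤ ε/2 := by
    have h2e : ε' + ε' = ENNReal.ofReal (ε/2) := by
      rw [hε'def, ← ENNReal.ofReal_add (by linarith) (by linarith)]
      ring_nf
    calc (ν ((K₁ ∪ K₂)ᶜ)).toReal ≤ (ε' + ε').toReal := by
          apply ENNReal.toReal_mono _ hνtot
          rw [h2e]
          exact ENNReal.ofReal_ne_top
    _ = ε/2 := by rw [h2e, ENNReal.toReal_ofReal (by linarith)]
  have hsplit : ∫ ω, |Z ω| ∂ℙ - ∫ ω, Z ω * g (Y ω) ∂ℙ = ∫ ω, F ω ∂ℙ :=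
    (integral_sub hZint.abs hZg).symm
  have : ∫ ω, F ω ∂ℙ ≤ ε := by
    rw [hFrestrict]
    calc ∫ ω in Wᶜ, F ω ∂ℙ ≤ ∫ ω in Wᶜ, 2 * |Z ω| ∂ℙ := hFle
    _ = 2 * (ν ((K₁ ∪ K₂)ᶜ)).toReal := h2
    _ ≤ 2 * (ε/2) := by linarith
    _ = ε := by ring
  linarith

/-- For integrable `X : Ω → ℝ` and `Y : Ω → ℝ^d` with absolutely continuous
law, `E|E[X|Y]|` equals the supremum of `E[X g(Y)]` over `g ∈ C¹_c` with `‖g‖_∞ ≤ 1`. -/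
theorem stmt0 {Ω : Type*} [MeasureSpace Ω] [IsProbabilityMeasure (ℙ : Measure Ω)]
    {d : ℕ} (X : Ω → ℝ) (Y : Ω → EuclideanSpace ℝ (Fin d))
    (hX : Integrable X ℙ) (hY : Measurable Y)
    (habs : ((ℙ : Measure Ω).map Y) ≪ (volume : Measure (EuclideanSpace ℝ (Fin d)))) :
    ∫ ω, |MeasureTheory.condExp (MeasurableSpace.comap Y inferInstance) ℙ X ω| ∂ℙ =
      sSup {r : ℝ | ∃ g : EuclideanSpace ℝ (Fin d) → ℝ,
        ContDiff ℝ 1 g ∧ HasCompactSupport g ∧ (∀ x, |g x| ≤ 1) ∧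
        r = ∫ ω, X ω * g (Y ω) ∂ℙ} := by
  classical
  have hm : MeasurableSpace.comap Y inferInstance ≤ (inferInstance : MeasurableSpace Ω) := by
    exact hY.comap_le
  set Z : Ω → ℝ := MeasureTheory.condExp (MeasurableSpace.comap Y inferInstance) ℙ X with hZdef
  have hZint : Integrable Z ℙ := integrable_condExp
  have hZm : StronglyMeasurable[MeasurableSpace.comap Y inferInstance] Z :=
    stronglyMeasurable_condExp
  set S : Set ℝ := {r : ℝ | ∃ g : EuclideanSpace ℝ (Fin d) → ℝ,
      ContDiff ℝ 1 g ∧ HasCompactSupport g ∧ (∀ x, |g x| ≤ 1) ∧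
      r = ∫ ω, X ω * g (Y ω) ∂ℙ} with hSdef
  -- the key identity, for each admissible g
  have hkey : ∀ g : EuclideanSpace ℝ (Fin d) → ℝ, ContDiff ℝ 1 g → (∀ x, |g x| ≤ 1) →
      ∫ ω, X ω * g (Y ω) ∂ℙ = ∫ ω, Z ω * g (Y ω) ∂ℙ := by
    intro g hg1 hg3
    have hYm : Measurable[MeasurableSpace.comap Y inferInstance] Y :=
      Measurable.of_comap_le le_rfl
    have hfm : StronglyMeasurable[MeasurableSpace.comap Y inferInstance]
        (fun ω => g (Y ω)) :=
      Measurable.stronglyMeasurable (hg1.continuous.measurable.comp hYm)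
    have hfb : ∀ ω, ‖g (Y ω)‖ ≤ 1 := fun ω => by
      rw [Real.norm_eq_abs]; exact hg3 (Y ω)
    exact key_eq ℙ hm hX hfm hfb
  -- each element of S is at most ∫ |Z|
  have hub : ∀ r ∈ S, r ≤ ∫ ω, |Z ω| ∂ℙ := by
    rintro r ⟨g, hg1, hg2, hg3, rfl⟩
    rw [hkey g hg1 hg3]
    have hZg : Integrable (fun ω => Z ω * g (Y ω)) ℙ := by
      have := Integrable.bdd_mul hZint
        ((hg1.continuous.measurable.comp hY)).aestronglyMeasurable
        (ae_of_all _ fun ω => by rw [Real.norm_eq_abs]; exact hg3 _)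
      simpa [mul_comm] using this
    apply integral_mono hZg hZint.abs
    intro ω
    calc Z ω * g (Y ω) ≤ |Z ω * g (Y ω)| := le_abs_self _
    _ = |Z ω| * |g (Y ω)| := abs_mul _ _
    _ ≤ |Z ω| * 1 := mul_le_mul_of_nonneg_left (hg3 _) (abs_nonneg _)
    _ = |Z ω| := mul_one _
  have h0S : (0 : ℝ) ∈ S := by
    refine ⟨0, contDiff_const, ?_, fun x => by simp, by simp⟩
    simp only [Function.support_zero, HasCompactSupport, tsupport, Pi.zero_apply]
    simp [Function.support_const]
  have hbdd : BddAbove S := ⟨∫ ω, |Z ω| ∂ℙ, fun r hr => hub r hr⟩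
  apply le_antisymm
  · refine le_of_forall_pos_le_add fun ε hε => ?_
    obtain ⟨g, hg1, hg2, hg3, hge⟩ := approx_lem Y hY Z hZint hZm hε
    have hrS : (∫ ω, X ω * g (Y ω) ∂ℙ) ∈ S := ⟨g, hg1, hg2, hg3, rfl⟩
    have h1 : ∫ ω, |Z ω| ∂ℙ - ε ≤ ∫ ω, X ω * g (Y ω) ∂ℙ := by
      rw [hkey g hg1 hg3]; exact hge
    have h2 := le_csSup hbdd hrS
    linarith
  · exact csSup_le ⟨0, h0S⟩ hub
end

section
/- Let F_1,...,F_n be i.i.d. copies of a centered, unit-variance random variable F admitting a square-integrable Stein factor τ_F, and let S_n = n^{-1/2}(F_1+...+F_n). If τ_{S_n}(S_n) = (1/n) E[Σ_{i=1}^n τ_F(F_i) | S_n], then E[(1 − τ_{S_n}(S_n))^2] ≤ E[(1 − τ_F(F))^2]/n. -/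
open MeasureTheory ProbabilityTheory

lemma condexp_sq_integral_le {Ω : Type*} [MeasureSpace Ω] [IsProbabilityMeasure (ℙ : Measure Ω)]
    {m : MeasurableSpace Ω} (hm : m ≤ MeasureSpace.toMeasurableSpace)
    {T : Ω → ℝ} (hT : MemLp T 2 ℙ) :
    ∫ ω, (ℙ[T|m]) ω ^ 2 ∂ℙ ≤ ∫ ω, T ω ^ 2 ∂ℙ := by
  haveI : SigmaFinite (Measure.trim ℙ hm) := by infer_instance
  set gL : Ω →₂[ℙ] ℝ := ↑(condExpL2 ℝ ℝ hm (hT.toLp T)) with hgL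
  set g : Ω → ℝ := ⇑gL with hg
  have hgL2 : MemLp g 2 ℙ := Lp.memLp _
  have hgm : AEStronglyMeasurable[m] g ℙ :=
    lpMeas.aestronglyMeasurable (condExpL2 ℝ ℝ hm (hT.toLp T))
  have hTi : Integrable T ℙ := hT.integrable one_le_two
  have hae : g =ᵐ[ℙ] ℙ[T|m] := by
    refine ae_eq_condExp_of_forall_setIntegral_eq hm hTi ?_ ?_ hgm
    · intro s hs hμs
      exact (hgL2.integrable one_le_two).restrict
    · intro s hs hμs
      have h1 := integral_condExpL2_eq (𝕜 := ℝ) hm (hT.toLp T) hs hμs.ne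
      have h2 : ∫ x in s, (hT.toLp T : Ω → ℝ) x ∂ℙ = ∫ x in s, T x ∂ℙ :=
        integral_congr_ae (ae_restrict_of_ae hT.coeFn_toLp)
      exact h1.trans h2
  set C : Ω → ℝ := ℙ[T|m] with hC
  have hC2 : MemLp C 2 ℙ := hgL2.ae_eq hae
  have hCT : Integrable (C * T) ℙ := by
    have h1 : Integrable (fun ω => ((C ω + T ω) ^ 2 - C ω ^ 2 - T ω ^ 2) / 2) ℙ :=
      (((hC2.add hT).integrable_sq.sub hC2.integrable_sq).sub hT.integrable_sq).div_const 2
    exact h1.congr (Filter.Eventually.of_forall fun ω => by simp [Pi.mul_apply]; ring)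
  have pull : ℙ[C * T|m] =ᵐ[ℙ] C * ℙ[T|m] :=
    condExp_mul_of_stronglyMeasurable_left stronglyMeasurable_condExp hCT hTi
  have hint : ∫ ω, C ω * T ω ∂ℙ = ∫ ω, C ω ^ 2 ∂ℙ := by
    calc ∫ ω, C ω * T ω ∂ℙ = ∫ ω, (ℙ[C * T|m]) ω ∂ℙ := (integral_condExp hm).symm
      _ = ∫ ω, C ω * C ω ∂ℙ := integral_congr_ae pull
      _ = ∫ ω, C ω ^ 2 ∂ℙ := by simp_rw [sq]
  have h0 : (0 : ℝ) ≤ ∫ ω, (T ω - C ω) ^ 2 ∂ℙ := integral_nonneg fun ω => sq_nonneg _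
  have hexp : ∫ ω, (T ω - C ω) ^ 2 ∂ℙ
      = (∫ ω, T ω ^ 2 ∂ℙ - 2 * ∫ ω, C ω * T ω ∂ℙ) + ∫ ω, C ω ^ 2 ∂ℙ := by
    have heq : (fun ω => (T ω - C ω) ^ 2)
        = fun ω => (T ω ^ 2 - 2 * (C ω * T ω)) + C ω ^ 2 := funext fun ω => by ring
    have hi1 : Integrable (fun ω => 2 * (C ω * T ω)) ℙ := hCT.const_mul 2
    have hi2 : Integrable (fun ω => T ω ^ 2 - 2 * (C ω * T ω)) ℙ :=
      hT.integrable_sq.sub hi1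
    rw [heq, integral_add hi2 hC2.integrable_sq, integral_sub hT.integrable_sq hi1,
      integral_const_mul]
  rw [hexp, hint] at h0
  linarith

/-- for i.i.d. copies `F_1, ..., F_n` of a centered unit-variance `F` with
square-integrable Stein factor `τ_F`, and `S_n = n^{-1/2} Σ F_i`, if
`τ_{S_n}(S_n) = (1/n) E[Σ τ_F(F_i) | S_n]` then
`E[(1 - τ_{S_n}(S_n))²] ≤ E[(1 - τ_F(F))²]/n`. -/
theorem stmt4 {Ω : Type*} [MeasureSpace Ω] [IsProbabilityMeasure (ℙ : Measure Ω)]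
    (n : ℕ) [NeZero n] (F : Fin n → Ω → ℝ) (hFm : ∀ i, Measurable (F i))
    (hindep : iIndepFun F ℙ)
    (hident : ∀ i, IdentDistrib (F i) (F 0) ℙ ℙ)
    (hmean : ∫ ω, F 0 ω ∂ℙ = 0) (hvar : ∫ ω, (F 0 ω) ^ 2 ∂ℙ = 1)
    (τ : ℝ → ℝ) (hτm : Measurable τ)
    (hτ2 : Integrable (fun ω => (τ (F 0 ω)) ^ 2) ℙ)
    (hstein : ∀ g : ℝ → ℝ, ContDiff ℝ 1 g → HasCompactSupport g →
      ∫ ω, F 0 ω * g (F 0 ω) ∂ℙ = ∫ ω, τ (F 0 ω) * deriv g (F 0 ω) ∂ℙ)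
    (hτmean : ∫ ω, τ (F 0 ω) ∂ℙ = 1)
    (S : Ω → ℝ) (hS : S = fun ω => (∑ i, F i ω) / Real.sqrt n)
    (τS : Ω → ℝ)
    (hτS : τS =ᵐ[ℙ] MeasureTheory.condExp (MeasurableSpace.comap S inferInstance) ℙ
      (fun ω => (∑ i, τ (F i ω)) / (n : ℝ))) :
    ∫ ω, (1 - τS ω) ^ 2 ∂ℙ ≤ (∫ ω, (1 - τ (F 0 ω)) ^ 2 ∂ℙ) / (n : ℝ) := by
  have hn : (n : ℝ) ≠ 0 := Nat.cast_ne_zero.mpr (NeZero.ne n)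
  have hSm : Measurable S := by
    rw [hS]; exact (Finset.measurable_sum _ fun i _ => hFm i).div_const _
  have hm : MeasurableSpace.comap S inferInstance ≤ MeasureSpace.toMeasurableSpace :=
    hSm.comap_le
  haveI : SigmaFinite (Measure.trim ℙ hm) := by infer_instance
  -- auxiliary random variables
  set Y : Fin n → Ω → ℝ := fun i ω => 1 - τ (F i ω) with hY
  set X : Ω → ℝ := fun ω => (∑ i, τ (F i ω)) / (n : ℝ) with hX
  set T : Ω → ℝ := fun ω => (∑ i, Y i ω) / (n : ℝ) with hT
  -- identical distribution
  have hid : ∀ i, IdentDistrib (fun ω => τ (F i ω)) (fun ω => τ (F 0 ω)) ℙ ℙ :=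
    fun i => (hident i).comp hτm
  have hidY : ∀ i, IdentDistrib (Y i) (Y 0) ℙ ℙ :=
    fun i => (hident i).comp (measurable_const.sub hτm)
  have hmemτ0 : MemLp (fun ω => τ (F 0 ω)) 2 ℙ :=
    (memLp_two_iff_integrable_sq (hτm.comp (hFm 0)).aestronglyMeasurable).2 hτ2
  have hmemτ : ∀ i, MemLp (fun ω => τ (F i ω)) 2 ℙ :=
    fun i => (hid i).symm.memLp_snd hmemτ0
  have hmemY : ∀ i, MemLp (Y i) 2 ℙ :=
    fun i => (memLp_const (1 : ℝ)).sub (hmemτ i)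
  have hintτ : ∀ i, Integrable (fun ω => τ (F i ω)) ℙ :=
    fun i => (hmemτ i).integrable one_le_two
  have hmeanY : ∀ i, ∫ ω, Y i ω ∂ℙ = 0 := by
    intro i
    have : ∫ ω, τ (F i ω) ∂ℙ = 1 := by rw [(hid i).integral_eq, hτmean]
    simp only [hY]
    rw [integral_sub (integrable_const 1) (hintτ i), this, integral_const]
    simp
  -- independence of the Y i
  have hindepY : iIndepFun Y ℙ :=
    hindep.comp (fun _ x => 1 - τ x) (fun _ => measurable_const.sub hτm)
  -- variance computation
  have hsum_int : Integrable (fun ω => ∑ i, Y i ω) ℙ :=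
    integrable_finset_sum _ fun i _ => (hmemY i).integrable one_le_two
  have hsum_mean : ∫ ω, ∑ i, Y i ω ∂ℙ = 0 := by
    rw [integral_finset_sum _ fun i _ => (hmemY i).integrable one_le_two]
    simp [hmeanY]
  have hmemsum : MemLp (∑ i, Y i) 2 ℙ := memLp_finset_sum' _ fun i _ => hmemY i
  have hvarsum : variance (∑ i, Y i) ℙ = ∑ i : Fin n, variance (Y i) ℙ :=
    IndepFun.variance_sum (fun i _ => hmemY i)
      (fun i _ j _ hij => hindepY.indepFun hij)
  have hvarY : ∀ i, variance (Y i) ℙ = ∫ ω, Y 0 ω ^ 2 ∂ℙ := by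
    intro i
    rw [variance_eq_sub (hmemY i)]
    have h2 : ∫ ω, Y i ω ^ 2 ∂ℙ = ∫ ω, Y 0 ω ^ 2 ∂ℙ :=
      ((hidY i).comp (measurable_id.pow_const 2)).integral_eq
    simp only [Pi.pow_apply]
    rw [hmeanY i, h2]; ring
  have hsumsq : ∫ ω, (∑ i, Y i ω) ^ 2 ∂ℙ = (n : ℝ) * ∫ ω, Y 0 ω ^ 2 ∂ℙ := by
    have h1 : variance (∑ i, Y i) ℙ = ∫ ω, (∑ i, Y i ω) ^ 2 ∂ℙ := by
      rw [variance_eq_sub hmemsum]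
      have : ∫ ω, (∑ i, Y i) ω ∂ℙ = 0 := by
        simpa [Finset.sum_apply] using hsum_mean
      simp only [Pi.pow_apply, Finset.sum_apply] at this ⊢
      rw [this]; ring
    rw [← h1, hvarsum]
    simp [hvarY]
  -- T has second moment E[Y₀²]/n
  have hmemT : MemLp T 2 ℙ := by
    have := hmemsum.const_mul ((n : ℝ)⁻¹)
    refine this.ae_eq (Filter.Eventually.of_forall fun ω => ?_)
    simp [hT, Finset.sum_apply, div_eq_inv_mul]
  have hTsq : ∫ ω, T ω ^ 2 ∂ℙ = (∫ ω, Y 0 ω ^ 2 ∂ℙ) / (n : ℝ) := by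
    simp only [hT, div_pow]
    rw [integral_div, hsumsq]
    field_simp
  -- relate 1 - τS to the conditional expectation of T
  have hTX : T = fun ω => 1 - X ω := by
    funext ω
    simp only [hT, hX, hY]
    rw [Finset.sum_sub_distrib, Finset.sum_const, Finset.card_univ, Fintype.card_fin]
    field_simp
    rw [nsmul_eq_mul, mul_one]
  have hXi : Integrable X ℙ :=
    (integrable_finset_sum _ fun i _ => hintτ i).div_const _
  have hcondT : ℙ[T|MeasurableSpace.comap S inferInstance] =ᵐ[ℙ] fun ω => 1 - (ℙ[X|MeasurableSpace.comap S inferInstance]) ω := by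
    rw [hTX]
    have h1 : ℙ[(fun _ => (1:ℝ)) - X|MeasurableSpace.comap S inferInstance] =ᵐ[ℙ] ℙ[(fun _ => (1:ℝ))|MeasurableSpace.comap S inferInstance] - ℙ[X|MeasurableSpace.comap S inferInstance] :=
      condExp_sub (integrable_const 1) hXi _
    have h2 : ℙ[(fun _ => (1:ℝ))|MeasurableSpace.comap S inferInstance] = fun _ => (1:ℝ) := condExp_const hm 1
    refine (condExp_congr_ae (Filter.Eventually.of_forall fun ω => ?_)).trans
      (h1.trans ?_)
    · rfl
    · rw [h2]
      filter_upwards with ω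
      simp
  have h1τS : (fun ω => (1 - τS ω) ^ 2) =ᵐ[ℙ] fun ω => (ℙ[T|MeasurableSpace.comap S inferInstance]) ω ^ 2 := by
    filter_upwards [hτS, hcondT] with ω h1 h2
    rw [h1, h2]
  calc ∫ ω, (1 - τS ω) ^ 2 ∂ℙ = ∫ ω, (ℙ[T|MeasurableSpace.comap S inferInstance]) ω ^ 2 ∂ℙ := integral_congr_ae h1τS
    _ ≤ ∫ ω, T ω ^ 2 ∂ℙ := condexp_sq_integral_le hm hmemT
    _ = (∫ ω, Y 0 ω ^ 2 ∂ℙ) / (n : ℝ) := hTsq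
    _ = (∫ ω, (1 - τ (F 0 ω)) ^ 2 ∂ℙ) / (n : ℝ) := rfl
end

section
/- Let F = (F_1,...,F_d) with each F_i in a finite sum ⊕_{k=0}^q C_k of Wiener chaoses. If E[det Γ(F)] > 0 (so that F has a density f on R^d), then the differential entropy of F is finite: Ent(F) < ∞. Specifically, if f ∈ L^{1+1/n}(R^d) for some n, then ∫ f log f ≤ n(∫ f^{1+1/n} − 1) < ∞. -/
open MeasureTheory ProbabilityTheory

/-- if a `d`-dimensional random vector `F` has a density `f` belonging to
`L^{1+1/n}(ℝ^d)` for some `n ≥ 1` (as is the case for vectors of chaotic random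
variables with `E[det Γ(F)] > 0`), then its differential entropy is finite:
`∫ f log f < ∞`, and indeed `∫ f log f ≤ n(∫ f^{1+1/n} - 1)`. -/
theorem stmt18 {Ω : Type*} [MeasureSpace Ω] [IsProbabilityMeasure (ℙ : Measure Ω)]
    {d : ℕ} (F : Ω → Fin d → ℝ) (hFm : Measurable F)
    (f : (Fin d → ℝ) → ℝ) (hfm : Measurable f) (hfnn : ∀ x, 0 ≤ f x)
    (hf : (ℙ : Measure Ω).map F = volume.withDensity (fun x => ENNReal.ofReal (f x)))
    (n : ℕ) (hn : 1 ≤ n)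
    (hLp : MemLp f (ENNReal.ofReal (1 + 1 / (n : ℝ))) volume) :
    (∫⁻ x : Fin d → ℝ, ENNReal.ofReal (f x * Real.log (f x)) < ⊤) ∧
      (Integrable (fun x : Fin d → ℝ => f x * Real.log (f x)) volume →
        ∫ x : Fin d → ℝ, f x * Real.log (f x) ≤
          (n : ℝ) * ((∫ x : Fin d → ℝ, f x ^ ((1 : ℝ) + 1 / (n : ℝ))) - 1)) := by
  have hn0 : (n : ℝ) ≠ 0 := Nat.cast_ne_zero.mpr (by omega)
  have hnpos : (0 : ℝ) < n := lt_of_le_of_ne (Nat.cast_nonneg n) (Ne.symm hn0)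
  have hp_pos : (0 : ℝ) < 1 + 1 / (n : ℝ) := by positivity
  -- pointwise key inequality
  have key : ∀ x, f x * Real.log (f x) ≤
      (n : ℝ) * (f x ^ ((1 : ℝ) + 1 / (n : ℝ)) - f x) := by
    intro x
    rcases lt_or_eq_of_le (hfnn x) with hpos | h0
    · have hmul : f x * f x ^ ((1 : ℝ) / n) = f x ^ ((1 : ℝ) + 1 / (n : ℝ)) := by
        rw [Real.rpow_add hpos, Real.rpow_one]
      have hlog1 : Real.log (f x ^ ((1 : ℝ) / n)) ≤ f x ^ ((1 : ℝ) / n) - 1 :=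
        Real.log_le_sub_one_of_pos (Real.rpow_pos_of_pos hpos _)
      rw [Real.log_rpow hpos] at hlog1
      have hlog2 : Real.log (f x) ≤ (n : ℝ) * (f x ^ ((1 : ℝ) / n) - 1) := by
        have := mul_le_mul_of_nonneg_left hlog1 hnpos.le
        calc Real.log (f x) = (n : ℝ) * (1 / (n : ℝ) * Real.log (f x)) := by
              field_simp
          _ ≤ (n : ℝ) * (f x ^ ((1 : ℝ) / n) - 1) := this
      nlinarith [mul_le_mul_of_nonneg_left hlog2 (hfnn x)]
    · rw [← h0, Real.zero_rpow (ne_of_gt hp_pos)]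
      simp
  -- integrability of f^(1+1/n)
  have hp0 : ENNReal.ofReal (1 + 1 / (n : ℝ)) ≠ 0 :=
    ne_of_gt (ENNReal.ofReal_pos.mpr hp_pos)
  have hptop : ENNReal.ofReal (1 + 1 / (n : ℝ)) ≠ ⊤ := ENNReal.ofReal_ne_top
  have hint_p : Integrable (fun x => f x ^ ((1 : ℝ) + 1 / (n : ℝ))) volume := by
    have h := hLp.integrable_norm_rpow hp0 hptop
    rw [ENNReal.toReal_ofReal hp_pos.le] at h
    exact h.congr (Filter.Eventually.of_forall fun x => by
      simp [Real.norm_of_nonneg (hfnn x)])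
  -- f integrates to 1
  have hmap_prob : IsProbabilityMeasure ((ℙ : Measure Ω).map F) :=
    Measure.isProbabilityMeasure_map hFm.aemeasurable
  have h1 : ∫⁻ x, ENNReal.ofReal (f x) = 1 := by
    have huniv := hmap_prob.measure_univ
    rw [hf, withDensity_apply _ MeasurableSet.univ, setLIntegral_univ] at huniv
    exact huniv
  have hint_f : Integrable f volume := by
    refine ⟨hfm.aestronglyMeasurable, ?_⟩
    rw [hasFiniteIntegral_iff_ofReal (Filter.Eventually.of_forall hfnn), h1]
    exact ENNReal.one_lt_top
  have hIf : ∫ x, f x = 1 := by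
    rw [integral_eq_lintegral_of_nonneg_ae (Filter.Eventually.of_forall hfnn)
      hfm.aestronglyMeasurable, h1]
    simp
  have hint_rhs : Integrable
      (fun x => (n : ℝ) * (f x ^ ((1 : ℝ) + 1 / (n : ℝ)) - f x)) volume :=
    (hint_p.sub hint_f).const_mul _
  constructor
  · calc ∫⁻ x, ENNReal.ofReal (f x * Real.log (f x))
        ≤ ∫⁻ x, ENNReal.ofReal ((n : ℝ) * (f x ^ ((1 : ℝ) + 1 / (n : ℝ)) - f x)) :=
          lintegral_mono fun x => ENNReal.ofReal_le_ofReal (key x)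
      _ < ⊤ := hint_rhs.lintegral_lt_top
  · intro hint
    have hle := integral_mono hint hint_rhs key
    rw [integral_const_mul, integral_sub hint_p hint_f, hIf] at hle
    exact hle
end
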